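/- With m = n/100, a uniformly random matrix H ∈ F_2^{m×n} is (m−1)-good with probability at least 1 − 2^{2m}·e^{−n/72}; in particular, (m−1)-good matrices exist for all sufficiently large n. -/

import Mathlib

/-- `H` is `s`-good: every submatrix formed by at least `n/3` of its columns
has rank at least `s`. -/
def IsGood (m n s : ℕ) (H : Matrix (Fin m) (Fin n) (ZMod 2)) : Prop :=
  ∀ S : Finset (Fin n), 3 * S.card ≥ n →
    (H.submatrix id (Subtype.val : {j // j ∈ S} → Fin n)).rank ≥ s


open Finset Matrix

/-- Counting lemma: the common kernel of two independent functionals is small. -/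
lemma card_zs_le (m : ℕ) (x y : Fin m → ZMod 2) (hx : x ≠ 0) (hy : y ≠ 0) (hxy : x ≠ y) :
    4 * (Finset.univ.filter (fun v : Fin m → ZMod 2 =>
        (∑ i, x i * v i) = 0 ∧ (∑ i, y i * v i) = 0)).card ≤ 2 ^ m := by
  classical
  set M : Matrix (Fin 2) (Fin m) (ZMod 2) := Matrix.of ![x, y] with hM
  have hli : LinearIndependent (ZMod 2) ![x, y] := by
    rw [linearIndependent_fin2]
    refine ⟨by simpa using hy, fun a => ?_⟩
    have h2 : a = 0 ∨ a = 1 := by revert a; decide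
    rcases h2 with rfl | rfl
    · simpa using Ne.symm hx
    · simpa using Ne.symm hxy
  have hrank : M.rank = 2 := by
    have h1 : M.rank = Mᵀ.rank := (Matrix.rank_transpose M).symm
    rw [h1, Matrix.rank_eq_finrank_span_cols]
    have : Set.range Mᵀ.col = Set.range ![x, y] := rfl
    rw [this, finrank_span_eq_card hli, Fintype.card_fin]
  have hadd : M.rank + Module.finrank (ZMod 2) (LinearMap.ker M.mulVecLin) = m := by
    have := LinearMap.finrank_range_add_finrank_ker M.mulVecLin
    rwa [Module.finrank_fintype_fun_eq_card, Fintype.card_fin] at this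
  have hker : Module.finrank (ZMod 2) (LinearMap.ker M.mulVecLin) = m - 2 := by omega
  have hm2 : 2 ≤ m := by omega
  have hcard : Fintype.card (LinearMap.ker M.mulVecLin) = 2 ^ (m - 2) := by
    rw [Module.card_eq_pow_finrank (K := ZMod 2), hker, ZMod.card]
  have hiff : ∀ v : Fin m → ZMod 2,
      ((∑ i, x i * v i) = 0 ∧ (∑ i, y i * v i) = 0) ↔ v ∈ LinearMap.ker M.mulVecLin := by
    intro v
    simp [LinearMap.mem_ker, hM, funext_iff, Fin.forall_fin_two, Matrix.mulVec,
      dotProduct]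
  have hfilt : (Finset.univ.filter (fun v : Fin m → ZMod 2 =>
        (∑ i, x i * v i) = 0 ∧ (∑ i, y i * v i) = 0)).card
      = Fintype.card (LinearMap.ker M.mulVecLin) := by
    rw [← Fintype.card_subtype]
    exact Fintype.card_congr (Equiv.subtypeEquivRight hiff)
  rw [hfilt, hcard]
  have h4 : (4:ℕ) * 2 ^ (m - 2) = 2 ^ (2 + (m - 2)) := by rw [pow_add]; norm_num
  rw [h4]
  exact Nat.pow_le_pow_right (by norm_num) (by clear hiff hfilt; omega)

/-- Explicit Chernoff-type numerical estimate. -/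
lemma chernoff_const (n : ℕ) :
    (3/2 : ℝ) ^ (-(n:ℝ)/3) * (9/8 : ℝ) ^ n ≤ Real.exp (-(n:ℝ)/72) := by
  set c : ℝ := (3/2 : ℝ) ^ (-(1/3) : ℝ) with hc
  have hcpos : 0 < c := Real.rpow_pos_of_pos (by norm_num) _
  have h1 : (3/2 : ℝ) ^ (-(n:ℝ)/3) = c ^ n := by
    rw [hc, ← Real.rpow_natCast ((3/2:ℝ) ^ (-(1/3):ℝ)) n, ← Real.rpow_mul (by norm_num)]
    congr 1; ring
  have h2 : Real.exp (-(n:ℝ)/72) = (Real.exp (-(1/72))) ^ n := by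
    rw [← Real.exp_nat_mul]; congr 1; ring
  have hkey : c * (9/8 : ℝ) ≤ Real.exp (-(1/72)) := by
    have h3 : (c * (9/8 : ℝ)) ^ (3:ℕ) ≤ (Real.exp (-(1/72))) ^ (3:ℕ) := by
      have hc3 : c ^ (3:ℕ) = (2/3 : ℝ) := by
        rw [hc, ← Real.rpow_natCast ((3/2:ℝ) ^ (-(1/3):ℝ)) 3, ← Real.rpow_mul (by norm_num)]
        norm_num
      have he : (Real.exp (-(1/72))) ^ (3:ℕ) = Real.exp (-(1/24)) := by
        rw [← Real.exp_nat_mul]; norm_num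
      rw [mul_pow, hc3, he]
      have := Real.add_one_le_exp (-(1/24) : ℝ)
      nlinarith [this]
    exact le_of_pow_le_pow_left₀ (by norm_num) (Real.exp_pos _).le h3
  calc (3/2 : ℝ) ^ (-(n:ℝ)/3) * (9/8 : ℝ) ^ n = (c * (9/8:ℝ)) ^ n := by
        rw [h1, mul_pow]
    _ ≤ (Real.exp (-(1/72))) ^ n := pow_le_pow_left₀ (by positivity) hkey n
    _ = Real.exp (-(n:ℝ)/72) := h2.symm

/-- Counting bound for the bad event attached to a fixed pair of functionals. -/
lemma card_badPair_le (m n : ℕ) (x y : Fin m → ZMod 2) (hx : x ≠ 0) (hy : y ≠ 0) (hxy : x ≠ y) :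
    ((Finset.univ.filter (fun H : Matrix (Fin m) (Fin n) (ZMod 2) =>
        n ≤ 3 * (Finset.univ.filter (fun c : Fin n =>
          (∑ i, x i * H i c) = 0 ∧ (∑ i, y i * H i c) = 0)).card)).card : ℝ)
      ≤ Real.exp (-(n:ℝ)/72) * 2 ^ (m * n) := by
  have hsumf : ∑ v : Fin m → ZMod 2,
      (if (∑ i, x i * v i) = 0 ∧ (∑ i, y i * v i) = 0 then (3/2 : ℝ) else 1)
      ≤ (9/8 : ℝ) * 2 ^ m := by
    rw [Finset.sum_ite, Finset.sum_const, Finset.sum_const, nsmul_eq_mul, nsmul_eq_mul]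
    have hZ := card_zs_le m x y hx hy hxy
    have hcompl := Finset.card_filter_add_card_filter_not
      (s := (univ : Finset (Fin m → ZMod 2)))
      (fun v => (∑ i, x i * v i) = 0 ∧ (∑ i, y i * v i) = 0)
    rw [Finset.card_univ, Fintype.card_fun, Fintype.card_fin, ZMod.card] at hcompl
    have h1' : ((4 * (Finset.univ.filter (fun v : Fin m → ZMod 2 =>
        (∑ i, x i * v i) = 0 ∧ (∑ i, y i * v i) = 0)).card : ℕ) : ℝ)
        ≤ ((2 ^ m : ℕ) : ℝ) := Nat.cast_le.mpr hZ
    have h2' := congrArg (fun k : ℕ => (k : ℝ)) hcompl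
    push_cast at h1' h2' ⊢
    linarith
  have hprod : ∀ H : Matrix (Fin m) (Fin n) (ZMod 2),
      (∏ c : Fin n, (if (∑ i, x i * H i c) = 0 ∧ (∑ i, y i * H i c) = 0 then (3/2:ℝ) else 1))
      = (3/2:ℝ) ^ (Finset.univ.filter (fun c : Fin n =>
          (∑ i, x i * H i c) = 0 ∧ (∑ i, y i * H i c) = 0)).card := by
    intro H
    rw [Finset.prod_ite, Finset.prod_const, Finset.prod_const, one_pow, mul_one]
  have hfnonneg : ∀ H : Matrix (Fin m) (Fin n) (ZMod 2),
      (0:ℝ) ≤ ∏ c : Fin n, (if (∑ i, x i * H i c) = 0 ∧ (∑ i, y i * H i c) = 0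
        then (3/2:ℝ) else 1) := by
    intro H
    apply Finset.prod_nonneg
    intro c _
    split <;> norm_num
  have hweight : ∀ H ∈ (Finset.univ.filter (fun H : Matrix (Fin m) (Fin n) (ZMod 2) =>
        n ≤ 3 * (Finset.univ.filter (fun c : Fin n =>
          (∑ i, x i * H i c) = 0 ∧ (∑ i, y i * H i c) = 0)).card)),
      (1:ℝ) ≤ (3/2:ℝ) ^ (-(n:ℝ)/3) *
        ∏ c : Fin n, (if (∑ i, x i * H i c) = 0 ∧ (∑ i, y i * H i c) = 0
          then (3/2:ℝ) else 1) := by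
    intro H hH
    rw [Finset.mem_filter] at hH
    rw [hprod H]
    have hN : (n:ℝ)/3 ≤ ((Finset.univ.filter (fun c : Fin n =>
        (∑ i, x i * H i c) = 0 ∧ (∑ i, y i * H i c) = 0)).card : ℕ) := by
      have := hH.2
      have h3 : (n:ℝ) ≤ 3 * ((Finset.univ.filter (fun c : Fin n =>
        (∑ i, x i * H i c) = 0 ∧ (∑ i, y i * H i c) = 0)).card : ℕ) := by
        exact_mod_cast Nat.cast_le.mpr this
      linarith
    rw [← Real.rpow_natCast (3/2 : ℝ), ← Real.rpow_add (by norm_num)]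
    have h0 : (0:ℝ) ≤ -(n:ℝ)/3 + ((Finset.univ.filter (fun c : Fin n =>
        (∑ i, x i * H i c) = 0 ∧ (∑ i, y i * H i c) = 0)).card : ℕ) := by linarith
    calc (1:ℝ) = (3/2:ℝ) ^ (0:ℝ) := (Real.rpow_zero _).symm
      _ ≤ _ := Real.rpow_le_rpow_of_exponent_le (by norm_num) h0
  have hchain : ((Finset.univ.filter (fun H : Matrix (Fin m) (Fin n) (ZMod 2) =>
        n ≤ 3 * (Finset.univ.filter (fun c : Fin n =>
          (∑ i, x i * H i c) = 0 ∧ (∑ i, y i * H i c) = 0)).card)).card : ℝ)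
      ≤ (3/2:ℝ) ^ (-(n:ℝ)/3) *
          ∑ H : Matrix (Fin m) (Fin n) (ZMod 2),
            ∏ c : Fin n, (if (∑ i, x i * H i c) = 0 ∧ (∑ i, y i * H i c) = 0
              then (3/2:ℝ) else 1) := by
    rw [Finset.mul_sum]
    calc ((Finset.univ.filter (fun H : Matrix (Fin m) (Fin n) (ZMod 2) =>
        n ≤ 3 * (Finset.univ.filter (fun c : Fin n =>
          (∑ i, x i * H i c) = 0 ∧ (∑ i, y i * H i c) = 0)).card)).card : ℝ)
        = ∑ H ∈ (Finset.univ.filter (fun H : Matrix (Fin m) (Fin n) (ZMod 2) =>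
        n ≤ 3 * (Finset.univ.filter (fun c : Fin n =>
          (∑ i, x i * H i c) = 0 ∧ (∑ i, y i * H i c) = 0)).card)), (1:ℝ) := by simp
      _ ≤ ∑ H ∈ (Finset.univ.filter (fun H : Matrix (Fin m) (Fin n) (ZMod 2) =>
        n ≤ 3 * (Finset.univ.filter (fun c : Fin n =>
          (∑ i, x i * H i c) = 0 ∧ (∑ i, y i * H i c) = 0)).card)),
          (3/2:ℝ) ^ (-(n:ℝ)/3) *
            ∏ c : Fin n, (if (∑ i, x i * H i c) = 0 ∧ (∑ i, y i * H i c) = 0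
              then (3/2:ℝ) else 1) := Finset.sum_le_sum hweight
      _ ≤ ∑ H : Matrix (Fin m) (Fin n) (ZMod 2),
          (3/2:ℝ) ^ (-(n:ℝ)/3) *
            ∏ c : Fin n, (if (∑ i, x i * H i c) = 0 ∧ (∑ i, y i * H i c) = 0
              then (3/2:ℝ) else 1) := by
        apply Finset.sum_le_sum_of_subset_of_nonneg (Finset.filter_subset _ _)
        intro H _ _
        exact mul_nonneg (Real.rpow_nonneg (by norm_num) _) (hfnonneg H)
  have hswap : (∑ H : Matrix (Fin m) (Fin n) (ZMod 2),
        ∏ c : Fin n, (if (∑ i, x i * H i c) = 0 ∧ (∑ i, y i * H i c) = 0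
          then (3/2:ℝ) else 1))
      = ∑ g : Fin n → (Fin m → ZMod 2),
          ∏ c : Fin n, (if (∑ i, x i * g c i) = 0 ∧ (∑ i, y i * g c i) = 0
            then (3/2:ℝ) else 1) := by
    apply Fintype.sum_equiv
      (⟨fun H => fun c i => H i c, fun g => Matrix.of fun i c => g c i,
        fun H => rfl, fun g => rfl⟩ :
        Matrix (Fin m) (Fin n) (ZMod 2) ≃ (Fin n → (Fin m → ZMod 2)))
    intro H
    rfl
  have hpow : (∑ g : Fin n → (Fin m → ZMod 2),
        ∏ c : Fin n, (if (∑ i, x i * g c i) = 0 ∧ (∑ i, y i * g c i) = 0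
          then (3/2:ℝ) else 1))
      = (∑ v : Fin m → ZMod 2,
          (if (∑ i, x i * v i) = 0 ∧ (∑ i, y i * v i) = 0 then (3/2:ℝ) else 1)) ^ n := by
    rw [Fintype.sum_pow]
  have hsum_nonneg : (0:ℝ) ≤ ∑ v : Fin m → ZMod 2,
      (if (∑ i, x i * v i) = 0 ∧ (∑ i, y i * v i) = 0 then (3/2:ℝ) else 1) := by
    apply Finset.sum_nonneg; intro v _; split <;> norm_num
  calc ((Finset.univ.filter (fun H : Matrix (Fin m) (Fin n) (ZMod 2) =>
        n ≤ 3 * (Finset.univ.filter (fun c : Fin n =>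
          (∑ i, x i * H i c) = 0 ∧ (∑ i, y i * H i c) = 0)).card)).card : ℝ)
      ≤ (3/2:ℝ) ^ (-(n:ℝ)/3) *
          ∑ H : Matrix (Fin m) (Fin n) (ZMod 2),
            ∏ c : Fin n, (if (∑ i, x i * H i c) = 0 ∧ (∑ i, y i * H i c) = 0
              then (3/2:ℝ) else 1) := hchain
    _ = (3/2:ℝ) ^ (-(n:ℝ)/3) * (∑ v : Fin m → ZMod 2,
          (if (∑ i, x i * v i) = 0 ∧ (∑ i, y i * v i) = 0 then (3/2:ℝ) else 1)) ^ n := by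
        rw [hswap, hpow]
    _ ≤ (3/2:ℝ) ^ (-(n:ℝ)/3) * ((9/8 : ℝ) * 2 ^ m) ^ n := by
        apply mul_le_mul_of_nonneg_left _ (Real.rpow_nonneg (by norm_num) _)
        exact pow_le_pow_left₀ hsum_nonneg hsumf n
    _ = ((3/2:ℝ) ^ (-(n:ℝ)/3) * (9/8:ℝ) ^ n) * 2 ^ (m * n) := by
        rw [mul_pow, ← pow_mul]; ring
    _ ≤ Real.exp (-(n:ℝ)/72) * 2 ^ (m * n) := by
        apply mul_le_mul_of_nonneg_right (chernoff_const n) (by positivity)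

/-- A matrix which is not `(m-1)`-good admits a pair of distinct nonzero functionals
vanishing on at least `n/3` of its columns. -/
lemma exists_bad_pair {m n : ℕ} (H : Matrix (Fin m) (Fin n) (ZMod 2))
    (h : ¬ IsGood m n (m - 1) H) :
    ∃ x y : Fin m → ZMod 2, x ≠ 0 ∧ y ≠ 0 ∧ x ≠ y ∧
      n ≤ 3 * (Finset.univ.filter (fun c : Fin n =>
        (∑ i, x i * H i c) = 0 ∧ (∑ i, y i * H i c) = 0)).card := by
  classical
  unfold IsGood at h
  push_neg at h
  obtain ⟨S, hS, hrank⟩ := h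
  set A := H.submatrix id (Subtype.val : {j // j ∈ S} → Fin n) with hA
  have hArank : A.rank ≤ m - 2 ∧ 2 ≤ m := by
    constructor <;> omega
  set φ := Aᵀ.mulVecLin with hφ
  have hrn : Aᵀ.rank + Module.finrank (ZMod 2) (LinearMap.ker φ) = m := by
    have := LinearMap.finrank_range_add_finrank_ker φ
    rwa [Module.finrank_fintype_fun_eq_card, Fintype.card_fin] at this
  have hT : Aᵀ.rank = A.rank := Matrix.rank_transpose A
  have hker2 : 2 ≤ Module.finrank (ZMod 2) (LinearMap.ker φ) := by
    have h1 := hArank.1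
    have h2 := hArank.2
    clear hrank hS hA hφ
    omega
  have hpos : 0 < Module.finrank (ZMod 2) (LinearMap.ker φ) := by omega
  have hnt : Nontrivial (LinearMap.ker φ) := Module.finrank_pos_iff.mp hpos
  obtain ⟨⟨x, hxker⟩, hxne⟩ := exists_ne (0 : LinearMap.ker φ)
  have hx0 : x ≠ 0 := by
    simpa [Submodule.mk_eq_zero] using hxne
  have hy : ∃ y, y ∈ LinearMap.ker φ ∧ y ≠ 0 ∧ y ≠ x := by
    by_contra hcon
    push_neg at hcon
    have hle : LinearMap.ker φ ≤ Submodule.span (ZMod 2) {x} := by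
      intro z hz
      by_cases hz0 : z = 0
      · simp [hz0]
      · rw [hcon z hz hz0]
        exact Submodule.mem_span_singleton_self x
    have hfin : Module.finrank (ZMod 2) (LinearMap.ker φ)
        ≤ Module.finrank (ZMod 2) (Submodule.span (ZMod 2) ({x} : Set (Fin m → ZMod 2))) :=
      Submodule.finrank_mono hle
    rw [finrank_span_singleton hx0] at hfin
    omega
  obtain ⟨y, hyker, hy0, hyx⟩ := hy
  refine ⟨x, y, hx0, hy0, (Ne.symm hyx), ?_⟩
  have hsub : S ⊆ Finset.univ.filter (fun c : Fin n =>
      (∑ i, x i * H i c) = 0 ∧ (∑ i, y i * H i c) = 0) := by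
    intro c hc
    rw [Finset.mem_filter]
    refine ⟨Finset.mem_univ _, ?_, ?_⟩
    · have := congrFun (LinearMap.mem_ker.mp hxker) ⟨c, hc⟩
      simpa [hφ, Matrix.mulVecLin_apply, Matrix.mulVec, dotProduct, hA,
        mul_comm] using this
    · have := congrFun (LinearMap.mem_ker.mp hyker) ⟨c, hc⟩
      simpa [hφ, Matrix.mulVecLin_apply, Matrix.mulVec, dotProduct, hA,
        mul_comm] using this
  have := Finset.card_le_card hsub
  omega

/-- Union bound: the number of non-good matrices is small. -/
lemma card_bad_le (m n : ℕ) [DecidablePred (fun H : Matrix (Fin m) (Fin n) (ZMod 2) =>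
      IsGood m n (m - 1) H)] :
    ((Finset.univ.filter (fun H : Matrix (Fin m) (Fin n) (ZMod 2) =>
        ¬ IsGood m n (m - 1) H)).card : ℝ)
      ≤ 2 ^ (2 * m) * Real.exp (-(n:ℝ)/72) * 2 ^ (m * n) := by
  classical
  set P : Finset ((Fin m → ZMod 2) × (Fin m → ZMod 2)) :=
    Finset.univ.filter (fun p => p.1 ≠ 0 ∧ p.2 ≠ 0 ∧ p.1 ≠ p.2) with hP
  have hsub : (Finset.univ.filter (fun H : Matrix (Fin m) (Fin n) (ZMod 2) =>
      ¬ IsGood m n (m - 1) H))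
      ⊆ P.biUnion (fun p => Finset.univ.filter
          (fun H : Matrix (Fin m) (Fin n) (ZMod 2) =>
            n ≤ 3 * (Finset.univ.filter (fun c : Fin n =>
              (∑ i, p.1 i * H i c) = 0 ∧ (∑ i, p.2 i * H i c) = 0)).card)) := by
    intro H hH
    rw [Finset.mem_filter] at hH
    obtain ⟨x, y, hx, hy, hxy, hcard⟩ := exists_bad_pair H hH.2
    rw [Finset.mem_biUnion]
    refine ⟨(x, y), ?_, ?_⟩
    · rw [hP, Finset.mem_filter]
      exact ⟨Finset.mem_univ _, hx, hy, hxy⟩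
    · rw [Finset.mem_filter]
      exact ⟨Finset.mem_univ _, hcard⟩
  have hP_card : P.card ≤ 2 ^ (2 * m) := by
    calc P.card ≤ (Finset.univ : Finset ((Fin m → ZMod 2) × (Fin m → ZMod 2))).card :=
          Finset.card_le_card (Finset.filter_subset _ _)
      _ = 2 ^ (2 * m) := by
          rw [Finset.card_univ, Fintype.card_prod, Fintype.card_fun, Fintype.card_fin,
            ZMod.card, ← pow_add, two_mul]
  calc ((Finset.univ.filter (fun H : Matrix (Fin m) (Fin n) (ZMod 2) =>
        ¬ IsGood m n (m - 1) H)).card : ℝ)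
      ≤ ((P.biUnion (fun p => Finset.univ.filter
          (fun H : Matrix (Fin m) (Fin n) (ZMod 2) =>
            n ≤ 3 * (Finset.univ.filter (fun c : Fin n =>
              (∑ i, p.1 i * H i c) = 0 ∧ (∑ i, p.2 i * H i c) = 0)).card))).card : ℝ) := by
        exact_mod_cast Nat.cast_le.mpr (Finset.card_le_card hsub)
    _ ≤ ((∑ p ∈ P, (Finset.univ.filter
          (fun H : Matrix (Fin m) (Fin n) (ZMod 2) =>
            n ≤ 3 * (Finset.univ.filter (fun c : Fin n =>
              (∑ i, p.1 i * H i c) = 0 ∧ (∑ i, p.2 i * H i c) = 0)).card)).card : ℕ) : ℝ) := by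
        exact_mod_cast Nat.cast_le.mpr (Finset.card_biUnion_le)
    _ = ∑ p ∈ P, ((Finset.univ.filter
          (fun H : Matrix (Fin m) (Fin n) (ZMod 2) =>
            n ≤ 3 * (Finset.univ.filter (fun c : Fin n =>
              (∑ i, p.1 i * H i c) = 0 ∧ (∑ i, p.2 i * H i c) = 0)).card)).card : ℝ) := by
        push_cast; rfl
    _ ≤ ∑ p ∈ P, Real.exp (-(n:ℝ)/72) * 2 ^ (m * n) := by
        apply Finset.sum_le_sum
        intro p hp
        rw [hP, Finset.mem_filter] at hp
        exact card_badPair_le m n p.1 p.2 hp.2.1 hp.2.2.1 hp.2.2.2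
    _ = (P.card : ℝ) * (Real.exp (-(n:ℝ)/72) * 2 ^ (m * n)) := by
        rw [Finset.sum_const, nsmul_eq_mul]
    _ ≤ (2 ^ (2 * m) : ℝ) * (Real.exp (-(n:ℝ)/72) * 2 ^ (m * n)) := by
        apply mul_le_mul_of_nonneg_right _ (by positivity)
        exact_mod_cast Nat.cast_le.mpr hP_card
    _ = 2 ^ (2 * m) * Real.exp (-(n:ℝ)/72) * 2 ^ (m * n) := by ring

/-- With `m = n/100`, a uniformly random matrix `H ∈ F₂^{m×n}` is `(m−1)`-good
with probability at least `1 − 2^{2m}·e^{−n/72}`; in particular `(m−1)`-good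
matrices exist for all sufficiently large `n`. -/
theorem good_matrices_exist :
    (∀ n : ℕ,
      ((Nat.card {H : Matrix (Fin (n / 100)) (Fin n) (ZMod 2) //
          IsGood (n / 100) n (n / 100 - 1) H} : ℝ)
        ≥ (1 - 2 ^ (2 * (n / 100)) * Real.exp (-(n : ℝ) / 72)) * 2 ^ ((n / 100) * n))) ∧
    (∃ N : ℕ, ∀ n ≥ N, ∃ H : Matrix (Fin (n / 100)) (Fin n) (ZMod 2),
      IsGood (n / 100) n (n / 100 - 1) H) := by
  classical
  have main : ∀ n : ℕ,
      ((Nat.card {H : Matrix (Fin (n / 100)) (Fin n) (ZMod 2) //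
          IsGood (n / 100) n (n / 100 - 1) H} : ℝ)
        ≥ (1 - 2 ^ (2 * (n / 100)) * Real.exp (-(n : ℝ) / 72)) * 2 ^ ((n / 100) * n)) := by
    intro n
    set m := n / 100 with hm
    have htotal : Fintype.card (Matrix (Fin m) (Fin n) (ZMod 2)) = 2 ^ (m * n) := by
      have h0 : Fintype.card (Matrix (Fin m) (Fin n) (ZMod 2))
          = Fintype.card (Fin m → Fin n → ZMod 2) := Fintype.card_congr (Equiv.refl _)
      rw [h0, Fintype.card_fun, Fintype.card_fun, Fintype.card_fin, Fintype.card_fin,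
        ZMod.card, ← pow_mul, Nat.mul_comm]
    have hNat : Nat.card {H : Matrix (Fin m) (Fin n) (ZMod 2) // IsGood m n (m - 1) H}
        = (Finset.univ.filter (fun H : Matrix (Fin m) (Fin n) (ZMod 2) =>
            IsGood m n (m - 1) H)).card := by
      rw [Nat.card_eq_fintype_card, Fintype.card_subtype]
    have hfilter := Finset.card_filter_add_card_filter_not
      (s := (Finset.univ : Finset (Matrix (Fin m) (Fin n) (ZMod 2))))
      (fun H => IsGood m n (m - 1) H)
    rw [Finset.card_univ, htotal] at hfilter
    have hbad := card_bad_le m n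
    have hgood : ((Finset.univ.filter (fun H : Matrix (Fin m) (Fin n) (ZMod 2) =>
        IsGood m n (m - 1) H)).card : ℝ)
        = 2 ^ (m * n) - ((Finset.univ.filter (fun H : Matrix (Fin m) (Fin n) (ZMod 2) =>
          ¬ IsGood m n (m - 1) H)).card : ℝ) := by
      have := congrArg (fun k : ℕ => (k : ℝ)) hfilter
      push_cast at this
      linarith
    rw [ge_iff_le, hNat, hgood]
    have hexp : (0:ℝ) < Real.exp (-(n:ℝ)/72) := Real.exp_pos _
    nlinarith [hbad]
  refine ⟨main, 0, fun n _ => ?_⟩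
  by_cases hm0 : n / 100 = 0
  · refine ⟨0, fun S hS => ?_⟩
    rw [hm0]
    exact Nat.zero_le _
  · -- n ≥ 100; show the bound is positive
    have hn100 : 100 ≤ n := by
      by_contra hlt
      exact hm0 (Nat.div_eq_of_lt (by omega))
    have hpos : (0:ℝ) < (1 - 2 ^ (2 * (n / 100)) * Real.exp (-(n : ℝ) / 72))
        * 2 ^ ((n / 100) * n) := by
      apply mul_pos _ (by positivity)
      have h2 : (2:ℝ) ^ (2 * (n / 100)) = Real.exp ((2 * (n / 100) : ℕ) * Real.log 2) := by
        rw [Real.exp_nat_mul, Real.exp_log (by norm_num)]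
      rw [h2, ← Real.exp_add]
      have hlog : Real.log 2 < 0.6931471808 := Real.log_two_lt_d9
      have hdiv : ((n / 100 : ℕ) : ℝ) ≤ (n : ℝ) / 100 := by
        exact_mod_cast Nat.cast_div_le
      have hlogpos : (0:ℝ) < Real.log 2 := Real.log_pos (by norm_num)
      have hn' : (100:ℝ) ≤ (n:ℝ) := by exact_mod_cast hn100
      have hexplt : Real.exp (((2 * (n / 100) : ℕ) : ℝ) * Real.log 2 + -(n:ℝ)/72) < 1 := by
        apply Real.exp_lt_one_iff.mpr
        have hcast : ((2 * (n / 100) : ℕ) : ℝ) = 2 * ((n / 100 : ℕ) : ℝ) := by push_cast; ring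
        rw [hcast]
        nlinarith [hdiv, hlog, hlogpos, hn']
      linarith
    have hlt := lt_of_lt_of_le hpos (main n)
    have hne : Nat.card {H : Matrix (Fin (n / 100)) (Fin n) (ZMod 2) //
        IsGood (n / 100) n (n / 100 - 1) H} ≠ 0 := by
      intro h0
      rw [h0] at hlt
      norm_num at hlt
    have hnonempty : Nonempty {H : Matrix (Fin (n / 100)) (Fin n) (ZMod 2) //
        IsGood (n / 100) n (n / 100 - 1) H} := Nat.card_ne_zero.mp hne |>.1
    obtain ⟨H, hH⟩ := hnonempty
    exact ⟨H, hH⟩
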